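/- Fix n ≥ 1, k ≥ 1, reals ρ₁,…,ρ_{2k}, and polynomials f₁,…,f_m ∈ ℝ[x₁,…,xₙ]. Suppose a polynomial r has a PC derivation of degree d from {f₁,…,f_m} with domain polynomials dom₁,…,domₙ, and assume each fᵢ appearing with a nonzero coefficient has total degree at most d. Then for every real ε > 0 there exist a sum of squares σ and polynomials h₁,…,h_m, g₁,…,gₙ such that r + ε = σ + ∑_{i=1}^{m} hᵢ·fᵢ + ∑_{j=1}^{n} gⱼ·domⱼ, where σ and every product hᵢ·fᵢ and gⱼ·domⱼ have total degree at most 2(d+k); and likewise with r replaced by −r on the left-hand side. -/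

import Mathlib

section Univariate
open Polynomial Filter


lemma eval_nonneg_at_of_punctured (q : ℝ[X]) (r : ℝ)
    (h : ∀ x : ℝ, x ≠ r → 0 ≤ q.eval x) : 0 ≤ q.eval r := by
  have ht : Filter.Tendsto (fun x : ℝ => q.eval x) (nhdsWithin r {r}ᶜ)
      (nhds (q.eval r)) := (q.continuous.tendsto r).mono_left nhdsWithin_le_nhds
  refine ge_of_tendsto ht ?_
  filter_upwards [self_mem_nhdsWithin] with x hx
  exact h x hx

lemma real_root_even (p : ℝ[X]) (r : ℝ) (hr : p.IsRoot r)
    (hpos : ∀ x : ℝ, 0 ≤ p.eval x) :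
    ∃ q : ℝ[X], p = (X - C r) ^ 2 * q ∧ ∀ x : ℝ, 0 ≤ q.eval x := by
  obtain ⟨q, hq⟩ := (Polynomial.dvd_iff_isRoot.mpr hr)
  have hq0 : q.eval r = 0 := by
    have h1 : 0 ≤ q.eval r := by
      have ht : Filter.Tendsto (fun x : ℝ => q.eval x) (nhdsWithin r (Set.Ioi r))
          (nhds (q.eval r)) := (q.continuous.tendsto r).mono_left nhdsWithin_le_nhds
      refine ge_of_tendsto ht ?_
      · filter_upwards [self_mem_nhdsWithin] with x hx
        have hpx := hpos x
        rw [hq] at hpx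
        simp only [eval_mul, eval_sub, eval_X, eval_C] at hpx
        have : (0:ℝ) < x - r := by simpa [sub_pos] using hx
        nlinarith
    have h2 : q.eval r ≤ 0 := by
      have ht : Filter.Tendsto (fun x : ℝ => q.eval x) (nhdsWithin r (Set.Iio r))
          (nhds (q.eval r)) := (q.continuous.tendsto r).mono_left nhdsWithin_le_nhds
      refine le_of_tendsto ht ?_
      · filter_upwards [self_mem_nhdsWithin] with x hx
        have hpx := hpos x
        rw [hq] at hpx
        simp only [eval_mul, eval_sub, eval_X, eval_C] at hpx
        have : x - r < 0 := by simpa [sub_neg] using hx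
        nlinarith
    linarith
  obtain ⟨q₂, hq₂⟩ := (Polynomial.dvd_iff_isRoot.mpr hq0)
  refine ⟨q₂, by rw [hq, hq₂]; ring, ?_⟩
  refine fun x => ?_
  rcases eq_or_ne x r with rfl | hxr
  · refine eval_nonneg_at_of_punctured q₂ x ?_
    intro y hy
    have hpy := hpos y
    rw [hq, hq₂] at hpy
    simp only [eval_mul, eval_sub, eval_X, eval_C] at hpy
    have : (0:ℝ) < (y - x) ^ 2 :=
      lt_of_le_of_ne (sq_nonneg _) (Ne.symm (pow_ne_zero 2 (sub_ne_zero.mpr hy)))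
    nlinarith
  · have hpx := hpos x
    rw [hq, hq₂] at hpx
    simp only [eval_mul, eval_sub, eval_X, eval_C] at hpx
    have : (0:ℝ) < (x - r) ^ 2 := by
      have hne : x - r ≠ 0 := sub_ne_zero.mpr hxr
      exact lt_of_le_of_ne (sq_nonneg _) (Ne.symm (pow_ne_zero 2 hne))
    nlinarith

/-- A nonnegative univariate real polynomial is a sum of two squares. -/
lemma nonneg_sum_two_squares :
    ∀ (N : ℕ) (p : ℝ[X]), p.natDegree ≤ N → (∀ x : ℝ, 0 ≤ p.eval x) →
      ∃ a b : ℝ[X], p = a ^ 2 + b ^ 2 := by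
  intro N
  induction N using Nat.strong_induction_on with
  | _ N IH =>
    intro p hdeg hpos
    by_cases hp0 : p = 0
    · exact ⟨0, 0, by simp [hp0]⟩
    by_cases hdeg0 : p.natDegree = 0
    · obtain ⟨c, rfl⟩ := Polynomial.natDegree_eq_zero.mp hdeg0
      have hc : 0 ≤ c := by simpa using hpos 0
      exact ⟨C (Real.sqrt c), 0, by rw [← map_pow, Real.sq_sqrt hc]; ring⟩
    have hdpos : 0 < p.degree := by
      rw [← Polynomial.natDegree_pos_iff_degree_pos]; omega
    obtain ⟨z, hz⟩ : ∃ z : ℂ, Polynomial.aeval z p = 0 :=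
      Complex.isAlgClosed.exists_aeval_eq_zero ℂ p hdpos.ne'
    rcases eq_or_ne z.im 0 with him | him
    · -- real root
      lift z to ℝ using him
      have hr : p.IsRoot z := by
        erw [Polynomial.aeval_ofReal, RCLike.ofReal_eq_zero] at hz
        exact hz
      obtain ⟨q, hpq, hqpos⟩ := real_root_even p z hr hpos
      have hX : ((X : ℝ[X]) - C z) ^ 2 ≠ 0 := pow_ne_zero _ (X_sub_C_ne_zero z)
      have hq0 : q ≠ 0 := by rintro rfl; rw [mul_zero] at hpq; exact hp0 hpq
      have hnd : p.natDegree = 2 + q.natDegree := by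
        rw [hpq, Polynomial.natDegree_mul hX hq0]
        simp [Polynomial.natDegree_pow]
      have hlt : q.natDegree < N := by omega
      obtain ⟨a, b, hab⟩ := IH q.natDegree hlt q le_rfl hqpos
      exact ⟨(X - C z) * a, (X - C z) * b, by rw [hpq, hab]; ring⟩
    · -- nonreal root: quadratic factor
      obtain ⟨q, hpq⟩ := p.quadratic_dvd_of_aeval_eq_zero_im_ne_zero hz him
      have hQform : (X:ℝ[X]) ^ 2 - C (2 * z.re) * X + C (‖z‖ ^ 2)
          = (X - C z.re) ^ 2 + C z.im ^ 2 := by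
        have hnorm : ‖z‖ ^ 2 = z.re ^ 2 + z.im ^ 2 := by
          rw [Complex.sq_norm, Complex.normSq_apply]; ring
        rw [hnorm]
        simp only [map_add, map_mul, map_pow, map_ofNat]
        ring
      have hQpos : ∀ x : ℝ, 0 < ((X:ℝ[X]) ^ 2 - C (2 * z.re) * X + C (‖z‖ ^ 2)).eval x := by
        intro x
        rw [hQform]
        simp only [eval_add, eval_pow, eval_sub, eval_X, eval_C]
        have : z.im ^ 2 > 0 := by positivity
        nlinarith [sq_nonneg (x - z.re)]
      have hq0 : q ≠ 0 := by rintro rfl; rw [mul_zero] at hpq; exact hp0 hpq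
      have hQ0 : (X:ℝ[X]) ^ 2 - C (2 * z.re) * X + C (‖z‖ ^ 2) ≠ 0 := by
        intro h
        have := hQpos 0
        rw [h] at this; simp at this
      have hQnd : ((X:ℝ[X]) ^ 2 - C (2 * z.re) * X + C (‖z‖ ^ 2)).natDegree = 2 := by
        compute_degree!
      have hqpos : ∀ x : ℝ, 0 ≤ q.eval x := by
        intro x
        have hpx := hpos x
        rw [hpq, eval_mul] at hpx
        have := hQpos x
        nlinarith
      have hnd : p.natDegree = 2 + q.natDegree := by
        rw [hpq, Polynomial.natDegree_mul hQ0 hq0, hQnd]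
      have hlt : q.natDegree < N := by omega
      obtain ⟨a, b, hab⟩ := IH q.natDegree hlt q le_rfl hqpos
      refine ⟨(X - C z.re) * a - C z.im * b, (X - C z.re) * b + C z.im * a, ?_⟩
      rw [hpq, hQform, hab]; ring

lemma dom_quad_bound (k : ℕ) (hk : 1 ≤ k) (ρ : Fin (2 * k) → ℝ) :
    ∃ M : ℝ, 0 < M ∧
      (∀ x : ℝ, 0 ≤ (C M + 2 * (∏ i, ((X:ℝ[X]) - C (ρ i))) - X ^ 2).eval x) ∧
      (C M + 2 * (∏ i, ((X:ℝ[X]) - C (ρ i))) - X ^ 2).natDegree ≤ 2 * k := by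
  set q : ℝ[X] := ∏ i, (X - C (ρ i)) with hq
  have hqmonic : q.Monic := monic_prod_of_monic _ _ fun i _ => monic_X_sub_C _
  have hqnd : q.natDegree = 2 * k := by
    rw [hq, Polynomial.natDegree_prod _ _ fun i _ => X_sub_C_ne_zero (ρ i)]
    simp
  set P : ℝ[X] := 2 * q - X ^ 2 with hP
  have hPnd_le : P.natDegree ≤ 2 * k := by
    refine (Polynomial.natDegree_sub_le _ _).trans ?_
    simp only [Polynomial.natDegree_X_pow]
    refine max_le ((Polynomial.natDegree_mul_le).trans ?_) (by omega)
    simp [hqnd]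
  have hPcoeff : P.coeff (2 * k) = 2 - (if 2 = 2 * k then 1 else 0) := by
    rw [hP]
    rw [Polynomial.coeff_sub, Polynomial.coeff_X_pow]
    have : (2 * q).coeff (2 * k) = 2 * q.coeff (2 * k) := by
      simp [Polynomial.coeff_ofNat_mul]
    rw [this, ← hqnd, hqmonic.coeff_natDegree]
    simp [eq_comm]
  have hPcoeff_pos : 0 < P.coeff (2 * k) := by
    rw [hPcoeff]; split <;> norm_num
  have hPnd : P.natDegree = 2 * k :=
    le_antisymm hPnd_le (Polynomial.le_natDegree_of_ne_zero hPcoeff_pos.ne')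
  have hlc : 0 < P.leadingCoeff := by
    rw [Polynomial.leadingCoeff, hPnd]; exact hPcoeff_pos
  have hdeg : 0 < P.degree := by
    rw [← Polynomial.natDegree_pos_iff_degree_pos, hPnd]; omega
  have h1 : Filter.Tendsto (fun x : ℝ => P.eval x) Filter.atTop Filter.atTop :=
    Polynomial.tendsto_atTop_of_leadingCoeff_nonneg P hdeg hlc.le
  have h2 : Filter.Tendsto (fun x : ℝ => P.eval x) Filter.atBot Filter.atTop := by
    have hXnd : (-(X : ℝ[X])).natDegree = 1 := by simp
    have hclc : (P.comp (-X)).leadingCoeff = P.leadingCoeff := by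
      rw [Polynomial.leadingCoeff_comp (by rw [hXnd]; omega)]
      simp [hPnd, pow_mul]
    have hcdeg : 0 < (P.comp (-X)).degree := by
      rw [← Polynomial.natDegree_pos_iff_degree_pos, Polynomial.natDegree_comp, hXnd, hPnd]
      omega
    have h3 := Polynomial.tendsto_atTop_of_leadingCoeff_nonneg (P.comp (-X)) hcdeg
      (by rw [hclc]; exact hlc.le)
    have heq : ∀ x : ℝ, (P.comp (-X)).eval x = P.eval (-x) := by
      intro x; simp [Polynomial.eval_comp]
    simp_rw [heq] at h3
    have := h3.comp (Filter.tendsto_neg_atBot_atTop :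
      Filter.Tendsto (fun x : ℝ => -x) Filter.atBot Filter.atTop)
    refine this.congr fun x => ?_
    simp
  obtain ⟨a, ha⟩ := Filter.eventually_atTop.mp (h1.eventually_ge_atTop 0)
  obtain ⟨b, hb⟩ := Filter.eventually_atBot.mp (h2.eventually_ge_atTop 0)
  obtain ⟨B, hB⟩ := (isCompact_Icc (a := b) (b := a)).image P.continuous |>.bddBelow
  refine ⟨|B| + 1, by positivity, ?_, ?_⟩
  · intro x
    simp only [Polynomial.eval_sub, Polynomial.eval_add, Polynomial.eval_C]
    have key : -(|B| + 1) ≤ P.eval x := by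
      rcases le_total x b with hxb | hxb
      · have := hb x hxb
        have h0 : (0:ℝ) ≤ |B| + 1 := by positivity
        linarith
      rcases le_total x a with hxa | hxa
      · have hmem : P.eval x ∈ (fun x => P.eval x) '' Set.Icc b a :=
          ⟨x, ⟨hxb, hxa⟩, rfl⟩
        have := hB hmem
        have := neg_abs_le B
        linarith
      · have := ha x hxa
        have h0 : (0:ℝ) ≤ |B| + 1 := by positivity
        linarith
    have : P.eval x = (2 * q - X ^ 2 : ℝ[X]).eval x := by rw [hP]
    simp only [Polynomial.eval_sub, Polynomial.eval_mul, Polynomial.eval_ofNat,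
      Polynomial.eval_pow, Polynomial.eval_X] at this key ⊢
    linarith [key]
  · have : C (|B| + 1) + 2 * q - X ^ 2 = C (|B| + 1) + P := by rw [hP]; ring
    rw [this]
    refine (Polynomial.natDegree_add_le _ _).trans ?_
    simp [hPnd_le]


end Univariate

open MvPolynomial

/-- The domain polynomial of the variable `xⱼ`: `∏_{i=1}^{2k} (xⱼ - ρᵢ)`. -/
noncomputable def domPoly (n k : ℕ) (ρ : Fin (2 * k) → ℝ) (j : Fin n) :
    MvPolynomial (Fin n) ℝ :=
  ∏ i, (X j - C (ρ i))

/-- A Polynomial Calculus (PC) derivation of degree `d` from the axioms `f i`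
with domain polynomials `domPoly n k ρ j`: every derived polynomial has total
degree at most `d`, and the derivation rules are: an axiom `f i`; a domain
polynomial; a real linear combination of two previously derived polynomials;
or a previously derived polynomial multiplied by a variable. -/
inductive PCDeriv {n k m : ℕ} (ρ : Fin (2 * k) → ℝ)
    (f : Fin m → MvPolynomial (Fin n) ℝ) (d : ℕ) :
    MvPolynomial (Fin n) ℝ → Prop
  | axm (i : Fin m) (h : (f i).totalDegree ≤ d) : PCDeriv ρ f d (f i)
  | dom (j : Fin n) (h : (domPoly n k ρ j).totalDegree ≤ d) :
      PCDeriv ρ f d (domPoly n k ρ j)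
  | lin (a b : ℝ) (p q : MvPolynomial (Fin n) ℝ) (hp : PCDeriv ρ f d p)
      (hq : PCDeriv ρ f d q) (h : (C a * p + C b * q).totalDegree ≤ d) :
      PCDeriv ρ f d (C a * p + C b * q)
  | mul (j : Fin n) (p : MvPolynomial (Fin n) ℝ) (hp : PCDeriv ρ f d p)
      (h : (X j * p).totalDegree ≤ d) : PCDeriv ρ f d (X j * p)

/-- A polynomial is a sum of squares. -/
def IsSOS {n : ℕ} (σ : MvPolynomial (Fin n) ℝ) : Prop :=
  ∃ (t : ℕ) (s : Fin t → MvPolynomial (Fin n) ℝ), σ = ∑ i, (s i) ^ 2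

section SOSLemmas

variable {n : ℕ}

lemma isSOS_zero : IsSOS (0 : MvPolynomial (Fin n) ℝ) := ⟨0, ![], by simp⟩

lemma isSOS_sq (p : MvPolynomial (Fin n) ℝ) : IsSOS (p ^ 2) := ⟨1, fun _ => p, by simp⟩

lemma IsSOS.add {σ τ : MvPolynomial (Fin n) ℝ} (hσ : IsSOS σ) (hτ : IsSOS τ) :
    IsSOS (σ + τ) := by
  obtain ⟨t₁, s₁, rfl⟩ := hσ
  obtain ⟨t₂, s₂, rfl⟩ := hτ
  refine ⟨t₁ + t₂, Fin.append s₁ s₂, ?_⟩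
  rw [Fin.sum_univ_add]
  simp

lemma isSOS_C {c : ℝ} (hc : 0 ≤ c) : IsSOS (C c : MvPolynomial (Fin n) ℝ) :=
  ⟨1, fun _ => C (Real.sqrt c), by simp [← map_pow, Real.sq_sqrt hc]⟩

lemma IsSOS.C_mul {σ : MvPolynomial (Fin n) ℝ} {c : ℝ} (hc : 0 ≤ c) (hσ : IsSOS σ) :
    IsSOS (C c * σ) := by
  obtain ⟨t, s, rfl⟩ := hσ
  refine ⟨t, fun i => C (Real.sqrt c) * s i, ?_⟩
  rw [Finset.mul_sum]
  refine Finset.sum_congr rfl fun i _ => ?_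
  rw [mul_pow, ← map_pow, Real.sq_sqrt hc]

lemma totalDegree_neg_le (p : MvPolynomial (Fin n) ℝ) :
    (-p).totalDegree ≤ p.totalDegree := by
  have : -p = (-1 : ℝ) • p := by simp
  rw [this]
  exact totalDegree_smul_le _ _

lemma totalDegree_C_mul_le (c : ℝ) (p : MvPolynomial (Fin n) ℝ) :
    (C c * p).totalDegree ≤ p.totalDegree := by
  refine (totalDegree_mul _ _).trans ?_
  simp

lemma domPoly_totalDegree_le (n k : ℕ) (ρ : Fin (2 * k) → ℝ) (j : Fin n) :
    (domPoly n k ρ j).totalDegree ≤ 2 * k := by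
  refine (totalDegree_finset_prod _ _).trans ?_
  have : ∀ i : Fin (2 * k), (X j - C (ρ i) : MvPolynomial (Fin n) ℝ).totalDegree ≤ 1 := by
    intro i
    rw [sub_eq_add_neg]
    refine (totalDegree_add _ _).trans (max_le ?_ ?_)
    · simp [totalDegree_X]
    · exact (totalDegree_neg_le _).trans (by simp)
  refine (Finset.sum_le_sum fun i _ => this i).trans ?_
  simp

lemma totalDegree_aeval_X_le (s : Polynomial ℝ) (j : Fin n) :
    (Polynomial.aeval (X j : MvPolynomial (Fin n) ℝ) s).totalDegree ≤ s.natDegree := by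
  rw [Polynomial.aeval_eq_sum_range]
  refine (totalDegree_finset_sum _ _).trans ?_
  refine Finset.sup_le fun i hi => ?_
  rw [Finset.mem_range] at hi
  rw [smul_eq_C_mul]
  refine (totalDegree_C_mul_le _ _).trans ?_
  refine (totalDegree_pow _ _).trans ?_
  have : (X j : MvPolynomial (Fin n) ℝ).totalDegree = 1 := totalDegree_X j
  rw [this]
  omega

end SOSLemmas

section Cert

variable {n k m : ℕ} (ρ : Fin (2 * k) → ℝ) (f : Fin m → MvPolynomial (Fin n) ℝ)

/-- The Positivstellensatz certificate. -/
def Cert (D : ℕ) (p : MvPolynomial (Fin n) ℝ) : Prop :=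
  ∃ (σ : MvPolynomial (Fin n) ℝ) (h : Fin m → MvPolynomial (Fin n) ℝ)
    (g : Fin n → MvPolynomial (Fin n) ℝ),
    IsSOS σ ∧ σ.totalDegree ≤ D ∧
    (∀ i, (h i * f i).totalDegree ≤ D) ∧
    (∀ j, (g j * domPoly n k ρ j).totalDegree ≤ D) ∧
    p = σ + (∑ i, h i * f i) + ∑ j, g j * domPoly n k ρ j

variable {ρ f}

lemma cert_congr {D : ℕ} {p p' : MvPolynomial (Fin n) ℝ} (h : Cert ρ f D p)
    (he : p = p') : Cert ρ f D p' := he ▸ h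

lemma cert_sos {D : ℕ} {σ : MvPolynomial (Fin n) ℝ} (hσ : IsSOS σ)
    (hd : σ.totalDegree ≤ D) : Cert ρ f D σ := by
  refine ⟨σ, 0, 0, hσ, hd, ?_, ?_, by simp⟩ <;> simp

lemma cert_add {D : ℕ} {p q : MvPolynomial (Fin n) ℝ} (hp : Cert ρ f D p)
    (hq : Cert ρ f D q) : Cert ρ f D (p + q) := by
  obtain ⟨σ₁, h₁, g₁, hσ₁, hd₁, hh₁, hg₁, he₁⟩ := hp
  obtain ⟨σ₂, h₂, g₂, hσ₂, hd₂, hh₂, hg₂, he₂⟩ := hq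
  refine ⟨σ₁ + σ₂, h₁ + h₂, g₁ + g₂, hσ₁.add hσ₂,
    (totalDegree_add _ _).trans (max_le hd₁ hd₂), ?_, ?_, ?_⟩
  · intro i
    simp only [Pi.add_apply, add_mul]
    exact (totalDegree_add _ _).trans (max_le (hh₁ i) (hh₂ i))
  · intro j
    simp only [Pi.add_apply, add_mul]
    exact (totalDegree_add _ _).trans (max_le (hg₁ j) (hg₂ j))
  · rw [he₁, he₂]
    simp only [Pi.add_apply, add_mul, Finset.sum_add_distrib]
    ring

lemma cert_C_mul {D : ℕ} {c : ℝ} (hc : 0 ≤ c) {p : MvPolynomial (Fin n) ℝ}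
    (hp : Cert ρ f D p) : Cert ρ f D (C c * p) := by
  obtain ⟨σ, h, g, hσ, hd, hh, hg, he⟩ := hp
  refine ⟨C c * σ, fun i => C c * h i, fun j => C c * g j, hσ.C_mul hc,
    (totalDegree_C_mul_le _ _).trans hd, ?_, ?_, ?_⟩
  · intro i
    rw [mul_assoc]
    exact (totalDegree_C_mul_le _ _).trans (hh i)
  · intro j
    rw [mul_assoc]
    exact (totalDegree_C_mul_le _ _).trans (hg j)
  · rw [he]
    simp only [mul_add, Finset.mul_sum, mul_assoc]

lemma cert_single_f {D : ℕ} (i₀ : Fin m) (h₀ : MvPolynomial (Fin n) ℝ)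
    (hd : (h₀ * f i₀).totalDegree ≤ D) : Cert ρ f D (h₀ * f i₀) := by
  refine ⟨0, fun i => if i = i₀ then h₀ else 0, 0, isSOS_zero, by simp, ?_, by simp, ?_⟩
  · intro i
    by_cases h : i = i₀ <;> simp [h, hd]
  · simp [ite_mul, Finset.sum_ite_eq']

lemma cert_single_dom {D : ℕ} (j₀ : Fin n) (g₀ : MvPolynomial (Fin n) ℝ)
    (hd : (g₀ * domPoly n k ρ j₀).totalDegree ≤ D) :
    Cert ρ f D (g₀ * domPoly n k ρ j₀) := by
  refine ⟨0, 0, fun j => if j = j₀ then g₀ else 0, isSOS_zero, by simp, by simp, ?_, ?_⟩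
  · intro j
    by_cases h : j = j₀ <;> simp [h, hd]
  · simp [ite_mul, Finset.sum_ite_eq']

lemma PCDeriv.totalDegree_le {d : ℕ} {p : MvPolynomial (Fin n) ℝ}
    (hp : PCDeriv ρ f d p) : p.totalDegree ≤ d := by
  induction hp with
  | axm i h => exact h
  | dom j h => exact h
  | lin a b p q hp hq h _ _ => exact h
  | mul j p hp h _ => exact h

/-- Main induction: a PC-derivable `p` admits certificates for `ε - p²`. -/
lemma cert_of_PCDeriv {d : ℕ} (hk : 1 ≤ k) {p : MvPolynomial (Fin n) ℝ}
    (hp : PCDeriv ρ f d p) :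
    ∀ ε : ℝ, 0 < ε → Cert ρ f (2 * (d + k)) (C ε - p ^ 2) := by
  induction hp with
  | axm i hfi =>
    intro ε hε
    refine cert_congr (cert_add (cert_sos (isSOS_C hε.le) (by simp))
      (cert_single_f i (-(f i)) ?_)) (by ring)
    refine (totalDegree_mul _ _).trans ?_
    have := (totalDegree_neg_le (f i)).trans hfi
    omega
  | dom j hdj =>
    intro ε hε
    refine cert_congr (cert_add (cert_sos (isSOS_C hε.le) (by simp))
      (cert_single_dom j (-(domPoly n k ρ j)) ?_)) (by ring)
    refine (totalDegree_mul _ _).trans ?_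
    have := (totalDegree_neg_le (domPoly n k ρ j)).trans hdj
    omega
  | lin a b p q hp hq hsum IHp IHq =>
    intro ε hε
    by_cases hs : 2 * a ^ 2 + 2 * b ^ 2 = 0
    · have ha : a = 0 := by nlinarith [sq_nonneg a, sq_nonneg b]
      have hb : b = 0 := by nlinarith [sq_nonneg a, sq_nonneg b]
      exact cert_congr (cert_sos (isSOS_C hε.le) (by simp))
        (by rw [ha, hb]; simp)
    · have hspos : 0 < 2 * a ^ 2 + 2 * b ^ 2 := by
        rcases lt_or_eq_of_le (by positivity : (0:ℝ) ≤ 2 * a ^ 2 + 2 * b ^ 2) with h | h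
        · exact h
        · exact absurd h.symm hs
      set ε₁ : ℝ := ε / (2 * a ^ 2 + 2 * b ^ 2) with hε₁
      have hε₁pos : 0 < ε₁ := by positivity
      have hdp : p.totalDegree ≤ d := hp.totalDegree_le
      have hdq : q.totalDegree ≤ d := hq.totalDegree_le
      have hsq_deg : ((C a * p - C b * q) ^ 2).totalDegree ≤ 2 * (d + k) := by
        refine (totalDegree_pow _ _).trans ?_
        have h1 : (C a * p - C b * q).totalDegree ≤ d := by
          rw [sub_eq_add_neg]
          refine (totalDegree_add _ _).trans (max_le ?_ ?_)
          · exact (totalDegree_C_mul_le _ _).trans hdp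
          · exact (totalDegree_neg_le _).trans ((totalDegree_C_mul_le _ _).trans hdq)
        omega
      have hC : (C ε : MvPolynomial (Fin n) ℝ)
          = 2 * C a ^ 2 * C ε₁ + 2 * C b ^ 2 * C ε₁ := by
        rw [show ((2 : MvPolynomial (Fin n) ℝ)) = C 2 from (map_ofNat C 2).symm,
          ← map_pow, ← map_pow, ← C_mul, ← C_mul, ← C_mul, ← C_mul, ← C_add]
        congr 1
        rw [hε₁]
        rw [mul_div_assoc', mul_div_assoc', ← add_div, eq_div_iff hspos.ne']
        ring
      have e1 : (C (2 * a ^ 2) : MvPolynomial (Fin n) ℝ) = 2 * C a ^ 2 := by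
        rw [map_mul, map_ofNat, map_pow]
      have e2 : (C (2 * b ^ 2) : MvPolynomial (Fin n) ℝ) = 2 * C b ^ 2 := by
        rw [map_mul, map_ofNat, map_pow]
      refine cert_congr (cert_add (cert_add
        (cert_C_mul (c := 2 * a ^ 2) (by positivity) (IHp ε₁ hε₁pos))
        (cert_C_mul (c := 2 * b ^ 2) (by positivity) (IHq ε₁ hε₁pos)))
        (cert_sos (isSOS_sq (C a * p - C b * q)) hsq_deg)) ?_
      show C (2 * a ^ 2) * (C ε₁ - p ^ 2) + C (2 * b ^ 2) * (C ε₁ - q ^ 2)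
          + (C a * p - C b * q) ^ 2 = C ε - (C a * p + C b * q) ^ 2
      rw [e1, e2, hC]
      ring
  | mul j p hp hXp IHp =>
    intro ε hε
    obtain ⟨M, hM, hMnonneg, hMdeg⟩ := dom_quad_bound k hk ρ
    set s : Polynomial ℝ :=
      Polynomial.C M + 2 * (∏ i, (Polynomial.X - Polynomial.C (ρ i))) - Polynomial.X ^ 2
      with hs
    obtain ⟨u, v, huv⟩ := nonneg_sum_two_squares s.natDegree s le_rfl hMnonneg
    set φ : Polynomial ℝ →ₐ[ℝ] MvPolynomial (Fin n) ℝ :=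
      Polynomial.aeval (X j : MvPolynomial (Fin n) ℝ) with hφ
    have hprod : φ (∏ i, (Polynomial.X - Polynomial.C (ρ i))) = domPoly n k ρ j := by
      rw [map_prod, domPoly]
      refine Finset.prod_congr rfl fun i _ => ?_
      rw [map_sub, Polynomial.aeval_X, Polynomial.aeval_C, MvPolynomial.algebraMap_eq]
    have hCM : φ (Polynomial.C M) = C M := by
      rw [hφ, Polynomial.aeval_C, MvPolynomial.algebraMap_eq]
    have hφs : φ s = C M + 2 * domPoly n k ρ j - (X j) ^ 2 := by
      rw [hs, map_sub, map_add, map_mul, map_pow, Polynomial.aeval_X, map_ofNat, hCM, hprod]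
    have hdp : p.totalDegree ≤ d := hp.totalDegree_le
    set σ₀ : MvPolynomial (Fin n) ℝ := φ s * p ^ 2 with hσ₀
    have hσ₀sos : IsSOS σ₀ := by
      refine ⟨2, ![φ u * p, φ v * p], ?_⟩
      rw [hσ₀, huv]
      simp only [map_add, map_pow, Fin.sum_univ_two]
      simp only [Matrix.cons_val_zero, Matrix.cons_val_one, Matrix.head_cons]
      ring
    have hσ₀deg : σ₀.totalDegree ≤ 2 * (d + k) := by
      rw [hσ₀]
      refine (totalDegree_mul _ _).trans ?_
      have h1 : (φ s).totalDegree ≤ 2 * k := (totalDegree_aeval_X_le s j).trans hMdeg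
      have h2 : (p ^ 2).totalDegree ≤ 2 * d :=
        (totalDegree_pow _ _).trans (by omega)
      omega
    have hdomdeg : ((C (-2) * p ^ 2) * domPoly n k ρ j).totalDegree ≤ 2 * (d + k) := by
      refine (totalDegree_mul _ _).trans ?_
      have h1 : (C (-2) * p ^ 2).totalDegree ≤ 2 * d :=
        (totalDegree_C_mul_le _ _).trans ((totalDegree_pow _ _).trans (by omega))
      have h2 := domPoly_totalDegree_le n k ρ j
      omega
    have hMε : C M * C (ε / M) = (C ε : MvPolynomial (Fin n) ℝ) := by
      rw [← C_mul]
      congr 1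
      field_simp
    refine cert_congr (cert_add (cert_add (cert_sos hσ₀sos hσ₀deg)
      (cert_single_dom j (C (-2) * p ^ 2) hdomdeg))
      (cert_C_mul hM.le (IHp (ε / M) (by positivity)))) ?_
    have hm2C : (C (-2) : MvPolynomial (Fin n) ℝ) = -2 := by
      rw [show ((-2 : ℝ)) = -(2:ℝ) by norm_num, map_neg, map_ofNat]
    show φ s * p ^ 2 + (C (-2) * p ^ 2) * domPoly n k ρ j
        + C M * (C (ε / M) - p ^ 2) = C ε - (X j * p) ^ 2
    rw [hφs, hm2C]
    linear_combination hMε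
end Cert

theorem statement12 (n k m d : ℕ) (hn : 1 ≤ n) (hk : 1 ≤ k)
    (ρ : Fin (2 * k) → ℝ) (f : Fin m → MvPolynomial (Fin n) ℝ)
    (r : MvPolynomial (Fin n) ℝ) (hr : PCDeriv ρ f d r)
    (hfdeg : ∀ i, (f i).totalDegree ≤ d)
    (ε : ℝ) (hε : 0 < ε) :
    (∃ (σ : MvPolynomial (Fin n) ℝ) (h : Fin m → MvPolynomial (Fin n) ℝ)
      (g : Fin n → MvPolynomial (Fin n) ℝ),
      IsSOS σ ∧ σ.totalDegree ≤ 2 * (d + k) ∧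
      (∀ i, (h i * f i).totalDegree ≤ 2 * (d + k)) ∧
      (∀ j, (g j * domPoly n k ρ j).totalDegree ≤ 2 * (d + k)) ∧
      r + C ε = σ + (∑ i, h i * f i) + ∑ j, g j * domPoly n k ρ j) ∧
    (∃ (σ : MvPolynomial (Fin n) ℝ) (h : Fin m → MvPolynomial (Fin n) ℝ)
      (g : Fin n → MvPolynomial (Fin n) ℝ),
      IsSOS σ ∧ σ.totalDegree ≤ 2 * (d + k) ∧
      (∀ i, (h i * f i).totalDegree ≤ 2 * (d + k)) ∧
      (∀ j, (g j * domPoly n k ρ j).totalDegree ≤ 2 * (d + k)) ∧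
      -r + C ε = σ + (∑ i, h i * f i) + ∑ j, g j * domPoly n k ρ j) := by
  have hmain := cert_of_PCDeriv hk hr (ε ^ 2) (by positivity)
  have hdr : r.totalDegree ≤ d := hr.totalDegree_le
  have key : C (1 / (2 * ε)) * C ε * 2 = (1 : MvPolynomial (Fin n) ℝ) := by
    rw [show ((2 : MvPolynomial (Fin n) ℝ)) = C 2 from (map_ofNat C 2).symm,
      ← C_mul, ← C_mul, ← C_1]
    congr 1
    field_simp
  have hsqC : (C (ε ^ 2) : MvPolynomial (Fin n) ℝ) = (C ε) ^ 2 := by rw [map_pow]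
  constructor
  · have hdeg : ((r + C ε) ^ 2).totalDegree ≤ 2 * (d + k) := by
      refine (totalDegree_pow _ _).trans ?_
      have : (r + C ε).totalDegree ≤ d :=
        (totalDegree_add _ _).trans (max_le hdr (by simp))
      omega
    have := cert_congr (cert_C_mul (c := 1 / (2 * ε)) (by positivity)
      (cert_add (cert_sos (isSOS_sq (r + C ε)) hdeg) hmain))
      (show C (1 / (2 * ε)) * ((r + C ε) ^ 2 + (C (ε ^ 2) - r ^ 2)) = r + C ε by
        rw [hsqC]
        linear_combination (r + C ε) * key)
    exact this
  · have hdeg : ((-r + C ε) ^ 2).totalDegree ≤ 2 * (d + k) := by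
      refine (totalDegree_pow _ _).trans ?_
      have : (-r + C ε).totalDegree ≤ d :=
        (totalDegree_add _ _).trans (max_le ((totalDegree_neg_le r).trans hdr) (by simp))
      omega
    have := cert_congr (cert_C_mul (c := 1 / (2 * ε)) (by positivity)
      (cert_add (cert_sos (isSOS_sq (-r + C ε)) hdeg) hmain))
      (show C (1 / (2 * ε)) * ((-r + C ε) ^ 2 + (C (ε ^ 2) - r ^ 2)) = -r + C ε by
        rw [hsqC]
        linear_combination (-r + C ε) * key)
    exact this
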